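/- Let Ω = (0,1), n ∈ ℕ, and consider the kernel φ_n^{(2)} := (n/4)·χ_{[−2/n, 2/n]}. Let a_1, …, a_n ∈ ℝ and f_n := Σ_{i=1}^n a_i χ_{[(i−1)/n, i/n]}. Then ∫_0^1 ∫_0^1 |f_n(x) − f_n(y)|/|x − y| · φ_n^{(2)}(x − y) dx dy = Σ_{i=2}^{n−1} ((1 − ln 2)/2) |a_{i+1} − a_{i−1}| + Σ_{i=2}^n (ln 2) |a_i − a_{i−1}|. -/

import Mathlib

open MeasureTheory Filter Topology
open scoped ENNReal

/-- The regularization functional on `Ω = (0,1)`: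
`R¹_φ(f) = ∫_0^1 ∫_0^1 |f x - f y| / |x - y| · φ(x - y) dx dy`. -/
noncomputable def R1d (φ f : ℝ → ℝ) : ℝ :=
  ∫ x in Set.Ioo (0 : ℝ) 1, ∫ y in Set.Ioo (0 : ℝ) 1, |f x - f y| / |x - y| * φ (x - y)

section myaux
open Set intervalIntegral

lemma my_log_integrableOn {b : ℝ} : IntegrableOn Real.log (Set.Ioc 0 b) := by
  rcases le_or_gt b 0 with hb | hb
  · rw [Set.Ioc_eq_empty (by exact fun h => absurd (h.trans_le hb) (lt_irrefl 0))]
    exact integrableOn_empty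
  · have hmeas : AEStronglyMeasurable Real.log (volume.restrict (Set.Ioc (0:ℝ) b)) :=
      Real.measurable_log.aestronglyMeasurable
    refine Integrable.mono' (g := fun x => 2 * x ^ (-(1:ℝ)/2) + b) ?_ hmeas ?_
    · refine Integrable.add ?_ (integrableOn_const (by simp) (by simp))
      have := (intervalIntegral.intervalIntegrable_rpow' (r := -(1:ℝ)/2) (by norm_num)
        (a := 0) (b := b))
      rw [intervalIntegrable_iff_integrableOn_Ioc_of_le hb.le] at this
      exact (this.const_mul 2)
    · rw [ae_restrict_iff' measurableSet_Ioc]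
      refine ae_of_all _ fun x hx => ?_
      obtain ⟨hx0, hxb⟩ := hx
      have hrpow : x ^ (-(1:ℝ)/2) = (Real.sqrt x)⁻¹ := by
        rw [Real.sqrt_eq_rpow, ← Real.rpow_neg hx0.le]
        norm_num
      have hs0 : 0 < Real.sqrt x := Real.sqrt_pos.2 hx0
      rcases le_or_gt x 1 with hx1 | hx1
      · have hlog : Real.log x ≤ 0 := Real.log_nonpos hx0.le hx1
        have h1 : Real.log (Real.sqrt x)⁻¹ ≤ (Real.sqrt x)⁻¹ - 1 :=
          Real.log_le_sub_one_of_pos (by positivity)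
        have h2 : -Real.log x ≤ 2 * (Real.sqrt x)⁻¹ := by
          have := Real.log_sqrt hx0.le
          rw [Real.log_inv] at h1
          nlinarith [this]
        rw [Real.norm_eq_abs, abs_of_nonpos hlog]
        simp only [hrpow]
        nlinarith [hb.le]
      · have hlog : 0 ≤ Real.log x := Real.log_nonneg hx1.le
        have : Real.log x ≤ x - 1 := Real.log_le_sub_one_of_pos hx0
        rw [Real.norm_eq_abs, abs_of_nonneg hlog]
        have : Real.log x ≤ b := by linarith
        have hpos : 0 ≤ 2 * x ^ (-(1:ℝ)/2) := by positivity
        linarith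

lemma my_logII {a b : ℝ} (ha : 0 ≤ a) (hb : 0 ≤ b) :
    IntervalIntegrable Real.log volume a b := by
  rw [intervalIntegrable_iff]
  refine (my_log_integrableOn (b := max a b)).mono_set ?_
  rw [Set.uIoc_eq_union]
  rintro x (hx | hx)
  · exact ⟨lt_of_le_of_lt ha hx.1, hx.2.trans (le_max_right a b)⟩
  · exact ⟨lt_of_le_of_lt hb hx.1, hx.2.trans (le_max_left a b)⟩

lemma my_integral_log0 {b : ℝ} (hb : 0 < b) :
    ∫ x in (0:ℝ)..b, Real.log x = b * Real.log b - b := by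
  have := intervalIntegral.integral_eq_sub_of_hasDeriv_right_of_le hb.le
    (f := fun x => x * Real.log x - x) (f' := Real.log)
    ((Real.continuous_mul_log.sub continuous_id).continuousOn)
    (fun x hx => by
      have := (Real.hasDerivAt_mul_log hx.1.ne').sub (hasDerivAt_id x)
      simpa [Pi.sub_def] using this.hasDerivWithinAt)
    (my_logII le_rfl hb.le)
  simpa using this

lemma my_integral_log_ab {a b : ℝ} (ha : 0 ≤ a) (hab : a ≤ b) :
    ∫ x in a..b, Real.log x = (b * Real.log b - b) - (a * Real.log a - a) := by
  rcases eq_or_lt_of_le ha with rfl | ha'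
  · rcases eq_or_lt_of_le hab with rfl | hb'
    · simp
    · simpa using my_integral_log0 hb'
  · have hb' : 0 < b := lt_of_lt_of_le ha' hab
    have hadd := intervalIntegral.integral_add_adjacent_intervals
      (my_logII le_rfl ha) (my_logII ha (ha.trans hab))
    rw [my_integral_log0 ha', my_integral_log0 hb'] at hadd
    linarith

lemma my_integral_inv_right {x a b : ℝ} (hxa : x < a) (hab : a ≤ b) :
    ∫ y in a..b, (y - x)⁻¹ = Real.log (b - x) - Real.log (a - x) := by
  have h0 : (0:ℝ) < a - x := by linarith
  have h1 : (0:ℝ) < b - x := by linarith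
  rw [intervalIntegral.integral_comp_sub_right (fun y => y⁻¹) x,
    integral_inv (by rw [Set.uIcc_of_le (by linarith)]; rintro ⟨h2, h3⟩; linarith),
    Real.log_div h1.ne' h0.ne']

lemma my_integral_inv_left {x a b : ℝ} (hbx : b < x) (hab : a ≤ b) :
    ∫ y in a..b, (x - y)⁻¹ = Real.log (x - a) - Real.log (x - b) := by
  have h0 : (0:ℝ) < x - b := by linarith
  have h1 : (0:ℝ) < x - a := by linarith
  rw [intervalIntegral.integral_comp_sub_left (fun y => y⁻¹) x,
    integral_inv (by rw [Set.uIcc_of_le (by linarith)]; rintro ⟨h2, h3⟩; linarith),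
    Real.log_div h1.ne' h0.ne']

lemma my_union_cells (n : ℕ) (hn : 1 ≤ n) :
    (⋃ i ∈ Finset.Icc 1 n, Set.Ioc (((i:ℝ)-1)/n) ((i:ℝ)/n)) = Set.Ioc (0:ℝ) 1 := by
  have hnpos : (0:ℝ) < n := by exact_mod_cast hn
  ext y
  simp only [Set.mem_iUnion, Finset.mem_Icc, Set.mem_Ioc, exists_prop]
  constructor
  · rintro ⟨i, ⟨hi1, hin⟩, hy1, hy2⟩
    have h1 : (1:ℝ) ≤ (i:ℝ) := by exact_mod_cast hi1
    have h2 : (i:ℝ) ≤ n := by exact_mod_cast hin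
    constructor
    · have : (0:ℝ) ≤ ((i:ℝ)-1)/n := div_nonneg (by linarith) hnpos.le
      linarith
    · calc y ≤ (i:ℝ)/n := hy2
        _ ≤ 1 := by rw [div_le_one hnpos]; exact h2
  · rintro ⟨hy0, hy1⟩
    refine ⟨⌈y * n⌉₊, ⟨?_, ?_⟩, ?_, ?_⟩
    · have : 0 < y * n := by positivity
      exact Nat.one_le_ceil_iff.2 this
    · exact Nat.ceil_le.2 (by nlinarith)
    · rw [div_lt_iff₀ hnpos]
      have := Nat.ceil_lt_add_one (by positivity : 0 ≤ y * n)
      linarith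
    · rw [le_div_iff₀ hnpos]
      exact Nat.le_ceil _
  
lemma my_split (n : ℕ) (hn : 1 ≤ n) (g : ℝ → ℝ)
    (hg : ∀ i ∈ Finset.Icc 1 n, IntegrableOn g (Set.Ioc (((i:ℝ)-1)/n) ((i:ℝ)/n))) :
    ∫ x in Set.Ioo (0:ℝ) 1, g x
      = ∑ i ∈ Finset.Icc 1 n, ∫ x in Set.Ioc (((i:ℝ)-1)/n) ((i:ℝ)/n), g x := by
  have hnpos : (0:ℝ) < n := by exact_mod_cast hn
  rw [← integral_Ioc_eq_integral_Ioo, ← my_union_cells n hn]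
  refine integral_biUnion_finset _ (fun i _ => measurableSet_Ioc) ?_ hg
  intro i hi j hj hij
  simp only [Finset.coe_Icc, Set.mem_Icc] at hi hj
  rcases lt_or_gt_of_ne hij with h | h
  · refine Set.Ioc_disjoint_Ioc.2 ?_
    have : (i:ℝ) ≤ (j:ℝ) - 1 := by
      have : (i:ℝ) + 1 ≤ j := by exact_mod_cast h
      linarith
    exact le_trans (min_le_left _ _) (le_trans (by gcongr) (le_max_right _ _))
  · refine Set.Ioc_disjoint_Ioc.2 ?_
    have : (j:ℝ) ≤ (i:ℝ) - 1 := by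
      have : (j:ℝ) + 1 ≤ i := by exact_mod_cast h
      linarith
    exact le_trans (min_le_right _ _) (le_trans (by gcongr) (le_max_left _ _))

noncomputable def myf (n : ℕ) (a : ℕ → ℝ) : ℝ → ℝ := fun x =>
  ∑ i ∈ Finset.Icc 1 n, a i * Set.indicator (Set.Icc (((i:ℝ)-1)/n) ((i:ℝ)/n)) 1 x

lemma my_f_meas (n : ℕ) (a : ℕ → ℝ) : Measurable (myf n a) := by
  refine Finset.measurable_sum _ (fun i _ => ?_)
  exact (measurable_const.indicator measurableSet_Icc).const_mul _

lemma my_f_cell (n : ℕ) (hn : 1 ≤ n) (a : ℕ → ℝ) {i : ℕ} (hi : i ∈ Finset.Icc 1 n)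
    {x : ℝ} (hx : x ∈ Set.Ioo (((i:ℝ)-1)/n) ((i:ℝ)/n)) : myf n a x = a i := by
  have hnpos : (0:ℝ) < n := by exact_mod_cast hn
  unfold myf
  rw [Finset.sum_eq_single i]
  · rw [Set.indicator_of_mem (Set.Ioo_subset_Icc_self hx), Pi.one_apply, mul_one]
  · intro j hj hji
    rw [Set.indicator_of_notMem, mul_zero]
    intro hmem
    obtain ⟨hm1, hm2⟩ := hmem
    obtain ⟨hx1, hx2⟩ := hx
    rcases lt_or_gt_of_ne hji with h | h
    · have : (j:ℝ) ≤ (i:ℝ) - 1 := by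
        have : (j:ℝ) + 1 ≤ i := by exact_mod_cast h
        linarith
      have : (j:ℝ)/n ≤ ((i:ℝ)-1)/n := by gcongr
      linarith
    · have : (i:ℝ) ≤ (j:ℝ) - 1 := by
        have : (i:ℝ) + 1 ≤ j := by exact_mod_cast h
        linarith
      have : (i:ℝ)/n ≤ ((j:ℝ)-1)/n := by gcongr
      linarith
  · intro h
    exact absurd hi h

noncomputable def myφ (n : ℕ) : ℝ → ℝ :=
  Set.indicator (Set.Icc (-(2 / (n : ℝ))) (2 / (n : ℝ))) (fun _ => (n : ℝ) / 4)

noncomputable def myK (n : ℕ) (a : ℕ → ℝ) (i j : ℕ) (x : ℝ) : ℝ :=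
  |a i - a j| * ((n:ℝ)/4) *
    (if j = i+1 then Real.log ((j:ℝ)/n - x) - Real.log (((j:ℝ)-1)/n - x)
     else if j = i+2 then Real.log (2/(n:ℝ)) - Real.log (((j:ℝ)-1)/n - x)
     else if i = j+1 then Real.log (x - ((j:ℝ)-1)/n) - Real.log (x - (j:ℝ)/n)
     else if i = j+2 then Real.log (2/(n:ℝ)) - Real.log (x - (j:ℝ)/n)
     else 0)

lemma my_g_int {C x lj uj : ℝ} (hxl : x < lj) :
    IntegrableOn (fun y => C * (y - x)⁻¹) (Set.Ioc lj uj) := by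
  rcases le_or_gt lj uj with h | h
  · refine (ContinuousOn.integrableOn_Icc ?_).mono_set Set.Ioc_subset_Icc_self
    exact continuousOn_const.mul
      (((continuousOn_id.sub continuousOn_const).inv₀) fun y hy => by
        have := hy.1; dsimp; intro hc; rw [sub_eq_zero] at hc; subst hc; linarith)
  · rw [Set.Ioc_eq_empty (by intro hc; linarith)]; exact integrableOn_empty

lemma my_g_int' {C x lj uj : ℝ} (hux : uj < x) :
    IntegrableOn (fun y => C * (x - y)⁻¹) (Set.Ioc lj uj) := by
  rcases le_or_gt lj uj with h | h
  · refine (ContinuousOn.integrableOn_Icc ?_).mono_set Set.Ioc_subset_Icc_self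
    exact continuousOn_const.mul
      (((continuousOn_const.sub continuousOn_id).inv₀) fun y hy => by
        have := hy.2; dsimp; intro hc; rw [sub_eq_zero] at hc; subst hc; linarith)
  · rw [Set.Ioc_eq_empty (by intro hc; linarith)]; exact integrableOn_empty

lemma my_g_val {C x p q : ℝ} (hxp : x < p) (hpq : p ≤ q) :
    ∫ y in Set.Ioc p q, C * (y - x)⁻¹ = C * (Real.log (q - x) - Real.log (p - x)) := by
  rw [← intervalIntegral.integral_of_le hpq, intervalIntegral.integral_const_mul,
    my_integral_inv_right hxp hpq]

lemma my_g_val' {C x p q : ℝ} (hqx : q < x) (hpq : p ≤ q) :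
    ∫ y in Set.Ioc p q, C * (x - y)⁻¹ = C * (Real.log (x - p) - Real.log (x - q)) := by
  rw [← intervalIntegral.integral_of_le hpq, intervalIntegral.integral_const_mul,
    my_integral_inv_left hqx hpq]

lemma my_div_le {p q nr : ℝ} (hn : 0 < nr) (h : p ≤ q) : p/nr ≤ q/nr := by gcongr

lemma my_piece (n : ℕ) (hn : 1 ≤ n) (a : ℕ → ℝ) {i j : ℕ}
    (hi : i ∈ Finset.Icc 1 n) (hj : j ∈ Finset.Icc 1 n)
    {x : ℝ} (hx : x ∈ Set.Ioo (((i:ℝ)-1)/n) ((i:ℝ)/n)) :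
    IntegrableOn (fun y => |a i - a j| / |x - y| * myφ n (x - y))
      (Set.Ioc (((j:ℝ)-1)/n) ((j:ℝ)/n)) ∧
    ∫ y in Set.Ioc (((j:ℝ)-1)/n) ((j:ℝ)/n),
      |a i - a j| / |x - y| * myφ n (x - y) = myK n a i j x := by
  have hnpos : (0:ℝ) < n := by exact_mod_cast hn
  have h2n : (0:ℝ) < 2/n := by positivity
  obtain ⟨hx1, hx2⟩ := hx
  by_cases hj1 : j = i+1
  · -- adjacent right
    subst hj1
    have e1 : ((↑(i+1):ℝ) - 1)/n = (i:ℝ)/n := by push_cast; ring_nf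
    have e2 : ((↑(i+1):ℝ))/n = ((i:ℝ)+1)/n := by push_cast; ring_nf
    have ekey : ((i:ℝ)-1)/n + 2/n = ((i:ℝ)+1)/n := by ring
    have hEq : Set.EqOn (fun y => |a i - a (i+1)| / |x - y| * myφ n (x - y))
        (fun y => (|a i - a (i+1)| * ((n:ℝ)/4)) * (y - x)⁻¹)
        (Set.Ioc ((i:ℝ)/n) (((i:ℝ)+1)/n)) := by
      intro y hy
      obtain ⟨hy1, hy2⟩ := hy
      have hyx : x < y := lt_trans hx2 hy1
      have habs : |x - y| = y - x := by rw [abs_sub_comm, abs_of_pos (by linarith)]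
      have hφ : myφ n (x - y) = (n:ℝ)/4 := by
        apply Set.indicator_of_mem
        constructor <;> [linarith; linarith]
      simp only [habs, hφ, div_eq_mul_inv]
      ring
    rw [e1, e2]
    have hle : (i:ℝ)/n ≤ ((i:ℝ)+1)/n := my_div_le hnpos (by linarith)
    constructor
    · rw [integrableOn_congr_fun hEq measurableSet_Ioc]
      exact my_g_int hx2
    · rw [setIntegral_congr_fun measurableSet_Ioc hEq, my_g_val hx2 hle]
      simp [myK, e1, e2]
  by_cases hj2 : j = i+2
  · subst hj2
    have e1 : ((↑(i+2):ℝ) - 1)/n = ((i:ℝ)+1)/n := by push_cast; ring_nf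
    have e2 : ((↑(i+2):ℝ))/n = ((i:ℝ)+2)/n := by push_cast; ring_nf
    have e3 : ((i:ℝ)-1)/n + 2/n = ((i:ℝ)+1)/n := by ring
    have e4 : (i:ℝ)/n + 2/n = ((i:ℝ)+2)/n := by ring
    have e5 : (i:ℝ)/n - 2/n = ((i:ℝ)-2)/n := by ring
    have hle1 : (i:ℝ)/n ≤ ((i:ℝ)+1)/n := my_div_le hnpos (by linarith)
    have hle2 : ((i:ℝ)-2)/n ≤ ((i:ℝ)+1)/n := my_div_le hnpos (by linarith)
    have hxl : x < ((i:ℝ)+1)/n := lt_of_lt_of_le hx2 hle1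
    have hEq : Set.EqOn (fun y => |a i - a (i+2)| / |x - y| * myφ n (x - y))
        (Set.indicator (Set.Icc (x - 2/n) (x + 2/n))
          (fun y => (|a i - a (i+2)| * ((n:ℝ)/4)) * (y - x)⁻¹))
        (Set.Ioc (((i:ℝ)+1)/n) (((i:ℝ)+2)/n)) := by
      intro y hy
      obtain ⟨hy1, hy2⟩ := hy
      have hyx : x < y := lt_trans hxl hy1
      have habs : |x - y| = y - x := by rw [abs_sub_comm, abs_of_pos (by linarith)]
      by_cases hmem : y ∈ Set.Icc (x - 2/n) (x + 2/n)
      · have hmem' : x - y ∈ Set.Icc (-(2/(n:ℝ))) (2/(n:ℝ)) := by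
          obtain ⟨hm1, hm2⟩ := hmem
          constructor <;> [linarith; linarith]
        have hφv : myφ n (x - y) = (n:ℝ)/4 := by
          apply Set.indicator_of_mem hmem'
        rw [Set.indicator_of_mem hmem]
        dsimp only
        rw [hφv, habs, div_eq_mul_inv]
        ring
      · have hmem' : x - y ∉ Set.Icc (-(2/(n:ℝ))) (2/(n:ℝ)) := by
          intro hc
          exact hmem ⟨by linarith [hc.2], by linarith [hc.1]⟩
        have hφv : myφ n (x - y) = 0 := by
          apply Set.indicator_of_notMem hmem'
        rw [Set.indicator_of_notMem hmem]
        dsimp only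
        rw [hφv, mul_zero]
    rw [e1, e2]
    have hset : Set.Ioc (((i:ℝ)+1)/n) (((i:ℝ)+2)/n) ∩ Set.Icc (x - 2/n) (x + 2/n)
        = Set.Ioc (((i:ℝ)+1)/n) (x + 2/n) := by
      ext y
      simp only [Set.mem_inter_iff, Set.mem_Ioc, Set.mem_Icc]
      constructor
      · rintro ⟨⟨h1, h2⟩, h3, h4⟩; exact ⟨h1, h4⟩
      · rintro ⟨h1, h2⟩
        refine ⟨⟨h1, by linarith⟩, by linarith, h2⟩
    constructor
    · rw [integrableOn_congr_fun hEq measurableSet_Ioc]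
      exact (my_g_int hxl).indicator measurableSet_Icc
    · rw [setIntegral_congr_fun measurableSet_Ioc hEq,
        setIntegral_indicator measurableSet_Icc, hset,
        my_g_val hxl (by linarith)]
      rw [show x + 2/n - x = 2/n from by ring]
      unfold myK
      rw [if_neg (by omega : ¬ i+2 = i+1), if_pos rfl, e1]
  by_cases hj3 : i = j+1
  · subst hj3
    have e0 : ((↑(j+1):ℝ) - 1)/n = (j:ℝ)/n := by push_cast; ring_nf
    have e0' : ((↑(j+1):ℝ))/n = ((j:ℝ)+1)/n := by push_cast; ring_nf
    rw [e0] at hx1; rw [e0'] at hx2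
    have hle : ((j:ℝ)-1)/n ≤ (j:ℝ)/n := my_div_le hnpos (by linarith)
    have hEq : Set.EqOn (fun y => |a (j+1) - a j| / |x - y| * myφ n (x - y))
        (fun y => (|a (j+1) - a j| * ((n:ℝ)/4)) * (x - y)⁻¹)
        (Set.Ioc (((j:ℝ)-1)/n) ((j:ℝ)/n)) := by
      intro y hy
      obtain ⟨hy1, hy2⟩ := hy
      have hyx : y < x := lt_of_le_of_lt hy2 hx1
      have habs : |x - y| = x - y := abs_of_pos (by linarith)
      have ekey : ((j:ℝ)-1)/n + 2/n = ((j:ℝ)+1)/n := by ring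
      have hφ : myφ n (x - y) = (n:ℝ)/4 := by
        apply Set.indicator_of_mem
        constructor <;> [linarith; linarith]
      simp only [habs, hφ, div_eq_mul_inv]
      ring
    constructor
    · rw [integrableOn_congr_fun hEq measurableSet_Ioc]
      exact my_g_int' hx1
    · rw [setIntegral_congr_fun measurableSet_Ioc hEq, my_g_val' hx1 hle]
      unfold myK
      rw [if_neg (by omega : ¬ j = (j+1)+1), if_neg (by omega : ¬ j = (j+1)+2), if_pos rfl]
  by_cases hj4 : i = j+2
  · subst hj4
    have e0 : ((↑(j+2):ℝ) - 1)/n = ((j:ℝ)+1)/n := by push_cast; ring_nf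
    have e0' : ((↑(j+2):ℝ))/n = ((j:ℝ)+2)/n := by push_cast; ring_nf
    rw [e0] at hx1; rw [e0'] at hx2
    have hle : ((j:ℝ)-1)/n ≤ (j:ℝ)/n := my_div_le hnpos (by linarith)
    have hju : (j:ℝ)/n ≤ ((j:ℝ)+1)/n := my_div_le hnpos (by linarith)
    have hjx : (j:ℝ)/n < x := lt_of_le_of_lt hju hx1
    have e4 : ((j:ℝ)+2)/n - 2/n = (j:ℝ)/n := by ring
    have e5 : ((j:ℝ)+1)/n - 2/n = ((j:ℝ)-1)/n := by ring
    have hEq : Set.EqOn (fun y => |a (j+2) - a j| / |x - y| * myφ n (x - y))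
        (Set.indicator (Set.Icc (x - 2/n) (x + 2/n))
          (fun y => (|a (j+2) - a j| * ((n:ℝ)/4)) * (x - y)⁻¹))
        (Set.Ioc (((j:ℝ)-1)/n) ((j:ℝ)/n)) := by
      intro y hy
      obtain ⟨hy1, hy2⟩ := hy
      have hyx : y < x := lt_of_le_of_lt hy2 hjx
      have habs : |x - y| = x - y := abs_of_pos (by linarith)
      by_cases hmem : y ∈ Set.Icc (x - 2/n) (x + 2/n)
      · have hmem' : x - y ∈ Set.Icc (-(2/(n:ℝ))) (2/(n:ℝ)) := by
          obtain ⟨hm1, hm2⟩ := hmem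
          constructor <;> [linarith; linarith]
        have hφv : myφ n (x - y) = (n:ℝ)/4 := by
          apply Set.indicator_of_mem hmem'
        rw [Set.indicator_of_mem hmem]
        dsimp only
        rw [hφv, habs, div_eq_mul_inv]
        ring
      · have hmem' : x - y ∉ Set.Icc (-(2/(n:ℝ))) (2/(n:ℝ)) := by
          intro hc
          exact hmem ⟨by linarith [hc.2], by linarith [hc.1]⟩
        have hφv : myφ n (x - y) = 0 := by
          apply Set.indicator_of_notMem hmem'
        rw [Set.indicator_of_notMem hmem]
        dsimp only
        rw [hφv, mul_zero]
    have hset : Set.Ioc (((j:ℝ)-1)/n) ((j:ℝ)/n) ∩ Set.Icc (x - 2/n) (x + 2/n)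
        = Set.Icc (x - 2/n) ((j:ℝ)/n) := by
      ext y
      simp only [Set.mem_inter_iff, Set.mem_Ioc, Set.mem_Icc]
      constructor
      · rintro ⟨⟨h1, h2⟩, h3, h4⟩; exact ⟨h3, h2⟩
      · rintro ⟨h1, h2⟩
        refine ⟨⟨by linarith, h2⟩, h1, by linarith⟩
    constructor
    · rw [integrableOn_congr_fun hEq measurableSet_Ioc]
      exact (my_g_int' hjx).indicator measurableSet_Icc
    · rw [setIntegral_congr_fun measurableSet_Ioc hEq,
        setIntegral_indicator measurableSet_Icc, hset,
        integral_Icc_eq_integral_Ioc,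
        my_g_val' hjx (by linarith)]
      rw [show x - (x - 2/n) = 2/n from by ring]
      unfold myK
      rw [if_neg (by omega : ¬ j = (j+2)+1), if_neg (by omega : ¬ j = (j+2)+2),
        if_neg (by omega : ¬ (j+2) = j+1), if_pos rfl]
  -- far case (including j = i)
  · by_cases hji : j = i
    · have hEq : Set.EqOn (fun y => |a i - a j| / |x - y| * myφ n (x - y))
          (fun _ => (0:ℝ)) (Set.Ioc (((j:ℝ)-1)/n) ((j:ℝ)/n)) := by
        intro y _
        simp [hji, sub_self]
      refine ⟨?_, ?_⟩
      · rw [integrableOn_congr_fun hEq measurableSet_Ioc]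
        exact integrableOn_const (by simp) (by simp)
      · rw [setIntegral_congr_fun measurableSet_Ioc hEq]
        simp [myK, hji, sub_self]
    · have hfar : i + 3 ≤ j ∨ j + 3 ≤ i := by omega
      have hEq : Set.EqOn (fun y => |a i - a j| / |x - y| * myφ n (x - y))
          (fun _ => (0:ℝ)) (Set.Ioc (((j:ℝ)-1)/n) ((j:ℝ)/n)) := by
        intro y hy
        obtain ⟨hy1, hy2⟩ := hy
        have hφ : myφ n (x - y) = 0 := by
          apply Set.indicator_of_notMem
          rcases hfar with h | h
          · have hc : (i:ℝ) + 3 ≤ (j:ℝ) := by exact_mod_cast h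
            have h1 : ((i:ℝ)+2)/n ≤ ((j:ℝ)-1)/n := my_div_le hnpos (by linarith)
            have h2 : (i:ℝ)/n + 2/n = ((i:ℝ)+2)/n := by ring
            rintro ⟨hc1, hc2⟩
            linarith
          · have hc : (j:ℝ) + 3 ≤ (i:ℝ) := by exact_mod_cast h
            have h1 : (j:ℝ)/n ≤ ((i:ℝ)-3)/n := my_div_le hnpos (by linarith)
            have h2 : ((i:ℝ)-1)/n - 2/n = ((i:ℝ)-3)/n := by ring
            rintro ⟨hc1, hc2⟩
            linarith
        simp [hφ]
      constructor
      · rw [integrableOn_congr_fun hEq measurableSet_Ioc]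
        exact integrableOn_const (by simp) (by simp)
      · rw [setIntegral_congr_fun measurableSet_Ioc hEq]
        simp only [myK, if_neg hj1, if_neg hj2, if_neg hj3, if_neg hj4, mul_zero]
        simp

lemma my_inner_piece (n : ℕ) (hn : 1 ≤ n) (a : ℕ → ℝ) {i j : ℕ}
    (hi : i ∈ Finset.Icc 1 n) (hj : j ∈ Finset.Icc 1 n)
    {x : ℝ} (hx : x ∈ Set.Ioo (((i:ℝ)-1)/n) ((i:ℝ)/n)) :
    IntegrableOn (fun y => |myf n a x - myf n a y| / |x - y| * myφ n (x - y))
      (Set.Ioc (((j:ℝ)-1)/n) ((j:ℝ)/n)) ∧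
    ∫ y in Set.Ioc (((j:ℝ)-1)/n) ((j:ℝ)/n),
      |myf n a x - myf n a y| / |x - y| * myφ n (x - y) = myK n a i j x := by
  have hfx : myf n a x = a i := my_f_cell n hn a hi hx
  have hae : (fun y => |myf n a x - myf n a y| / |x - y| * myφ n (x - y))
      =ᵐ[volume.restrict (Set.Ioc (((j:ℝ)-1)/n) ((j:ℝ)/n))]
      (fun y => |a i - a j| / |x - y| * myφ n (x - y)) := by
    rw [← Measure.restrict_congr_set MeasureTheory.Ioo_ae_eq_Ioc,
      Filter.EventuallyEq, ae_restrict_iff' measurableSet_Ioo]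
    refine ae_of_all _ fun y hy => ?_
    rw [hfx, my_f_cell n hn a hj hy]
  exact ⟨(my_piece n hn a hi hj hx).1.congr hae.symm,
    (integral_congr_ae hae).trans (my_piece n hn a hi hj hx).2⟩

lemma my_inner (n : ℕ) (hn : 1 ≤ n) (a : ℕ → ℝ) {i : ℕ}
    (hi : i ∈ Finset.Icc 1 n) {x : ℝ} (hx : x ∈ Set.Ioo (((i:ℝ)-1)/n) ((i:ℝ)/n)) :
    ∫ y in Set.Ioo (0:ℝ) 1, |myf n a x - myf n a y| / |x - y| * myφ n (x - y)
      = ∑ j ∈ Finset.Icc 1 n, myK n a i j x := by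
  rw [my_split n hn _ (fun j hj => (my_inner_piece n hn a hi hj hx).1)]
  exact Finset.sum_congr rfl (fun j hj => (my_inner_piece n hn a hi hj hx).2)

lemma my_int_log_left {u p q A B : ℝ} (hA : u - p = A) (hB : u - q = B)
    (hB0 : 0 ≤ B) (hpq : p ≤ q) :
    ∫ x in p..q, Real.log (u - x) = (A * Real.log A - A) - (B * Real.log B - B) := by
  rw [intervalIntegral.integral_comp_sub_left Real.log u, hB, hA]
  exact my_integral_log_ab hB0 (by linarith)

lemma my_int_log_right {c p q A B : ℝ} (hA : q - c = A) (hB : p - c = B)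
    (hB0 : 0 ≤ B) (hpq : p ≤ q) :
    ∫ x in p..q, Real.log (x - c) = (A * Real.log A - A) - (B * Real.log B - B) := by
  rw [intervalIntegral.integral_comp_sub_right Real.log c, hB, hA]
  exact my_integral_log_ab hB0 (by linarith)

lemma my_II_log_left {u p q : ℝ} (hq : q ≤ u) (hp : p ≤ u) :
    IntervalIntegrable (fun x => Real.log (u - x)) volume p q := by
  have := (my_logII (a := u - p) (b := u - q) (by linarith) (by linarith)).comp_sub_left u
  simpa using this

lemma my_II_log_right {c p q : ℝ} (hp : c ≤ p) (hq : c ≤ q) :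
    IntervalIntegrable (fun x => Real.log (x - c)) volume p q := by
  have := (my_logII (a := p - c) (b := q - c) (by linarith) (by linarith)).comp_sub_right c
  simpa using this

noncomputable def myP (n : ℕ) (a : ℕ → ℝ) (i j : ℕ) : ℝ :=
  if j = i+1 ∨ i = j+1 then Real.log 2 / 2 * |a i - a j|
  else if j = i+2 ∨ i = j+2 then (1 - Real.log 2)/4 * |a i - a j| else 0

lemma my_outer_piece (n : ℕ) (hn : 1 ≤ n) (a : ℕ → ℝ) {i j : ℕ}
    (hi : i ∈ Finset.Icc 1 n) (hj : j ∈ Finset.Icc 1 n) :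
    IntegrableOn (fun x => myK n a i j x) (Set.Ioc (((i:ℝ)-1)/n) ((i:ℝ)/n)) ∧
    ∫ x in Set.Ioc (((i:ℝ)-1)/n) ((i:ℝ)/n), myK n a i j x = myP n a i j := by
  have hnpos : (0:ℝ) < n := by exact_mod_cast hn
  have hn0 : (n:ℝ) ≠ 0 := hnpos.ne'
  have hle : ((i:ℝ)-1)/n ≤ (i:ℝ)/n := my_div_le hnpos (by linarith)
  have e2n : Real.log (2/(n:ℝ)) = Real.log 2 - Real.log n :=
    Real.log_div two_ne_zero hn0
  have e1n : Real.log (1/(n:ℝ)) = - Real.log n := by rw [one_div, Real.log_inv]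
  have h1n : (0:ℝ) ≤ 1/n := by positivity
  by_cases hj1 : j = i+1
  · subst hj1
    have hK : (fun x => myK n a i (i+1) x) = fun x =>
        (|a i - a (i+1)| * ((n:ℝ)/4)) *
          (Real.log (((i:ℝ)+1)/n - x) - Real.log ((i:ℝ)/n - x)) := by
      funext x
      unfold myK
      rw [if_pos rfl, show ((↑(i+1):ℝ))/n = ((i:ℝ)+1)/n from by push_cast; ring,
        show ((↑(i+1):ℝ)-1)/n = (i:ℝ)/n from by push_cast; ring]
    rw [hK]
    have hII1 : IntervalIntegrable (fun x => Real.log (((i:ℝ)+1)/n - x)) volume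
        (((i:ℝ)-1)/n) ((i:ℝ)/n) :=
      my_II_log_left (my_div_le hnpos (by linarith)) (my_div_le hnpos (by linarith))
    have hII2 : IntervalIntegrable (fun x => Real.log ((i:ℝ)/n - x)) volume
        (((i:ℝ)-1)/n) ((i:ℝ)/n) :=
      my_II_log_left le_rfl (my_div_le hnpos (by linarith))
    constructor
    · rw [← intervalIntegrable_iff_integrableOn_Ioc_of_le hle]
      exact ((hII1.sub hII2).const_mul _)
    · rw [← intervalIntegral.integral_of_le hle, intervalIntegral.integral_const_mul,
        intervalIntegral.integral_sub hII1 hII2,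
        my_int_log_left (by ring : ((i:ℝ)+1)/n - ((i:ℝ)-1)/n = 2/n)
          (by ring : ((i:ℝ)+1)/n - (i:ℝ)/n = 1/n) h1n hle,
        my_int_log_left (by ring : (i:ℝ)/n - ((i:ℝ)-1)/n = 1/n)
          (by ring : (i:ℝ)/n - (i:ℝ)/n = 0) le_rfl hle]
      unfold myP
      rw [if_pos (Or.inl rfl), e2n, e1n, Real.log_zero]
      field_simp
      ring
  by_cases hj2 : j = i+2
  · subst hj2
    have hK : (fun x => myK n a i (i+2) x) = fun x =>
        (|a i - a (i+2)| * ((n:ℝ)/4)) *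
          (Real.log (2/(n:ℝ)) - Real.log (((i:ℝ)+1)/n - x)) := by
      funext x
      unfold myK
      rw [if_neg (by omega : ¬ i+2 = i+1), if_pos rfl,
        show ((↑(i+2):ℝ)-1)/n = ((i:ℝ)+1)/n from by push_cast; ring]
    rw [hK]
    have hII1 : IntervalIntegrable (fun x => Real.log (((i:ℝ)+1)/n - x)) volume
        (((i:ℝ)-1)/n) ((i:ℝ)/n) :=
      my_II_log_left (my_div_le hnpos (by linarith)) (my_div_le hnpos (by linarith))
    constructor
    · rw [← intervalIntegrable_iff_integrableOn_Ioc_of_le hle]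
      exact ((intervalIntegrable_const.sub hII1).const_mul _)
    · rw [← intervalIntegral.integral_of_le hle, intervalIntegral.integral_const_mul,
        intervalIntegral.integral_sub intervalIntegrable_const hII1,
        intervalIntegral.integral_const,
        my_int_log_left (by ring : ((i:ℝ)+1)/n - ((i:ℝ)-1)/n = 2/n)
          (by ring : ((i:ℝ)+1)/n - (i:ℝ)/n = 1/n) h1n hle,
        show (i:ℝ)/n - ((i:ℝ)-1)/n = 1/n from by ring]
      unfold myP
      rw [if_neg (by omega), if_pos (Or.inl rfl), e2n, e1n, smul_eq_mul]
      field_simp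
      ring
  by_cases hj3 : i = j+1
  · subst hj3
    have e0 : ((↑(j+1):ℝ) - 1)/n = (j:ℝ)/n := by push_cast; ring
    have e0' : ((↑(j+1):ℝ))/n = ((j:ℝ)+1)/n := by push_cast; ring
    rw [e0, e0'] at hle ⊢
    have hK : (fun x => myK n a (j+1) j x) = fun x =>
        (|a (j+1) - a j| * ((n:ℝ)/4)) *
          (Real.log (x - ((j:ℝ)-1)/n) - Real.log (x - (j:ℝ)/n)) := by
      funext x
      unfold myK
      rw [if_neg (by omega : ¬ j = (j+1)+1), if_neg (by omega : ¬ j = (j+1)+2), if_pos rfl]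
    rw [hK]
    have hII1 : IntervalIntegrable (fun x => Real.log (x - ((j:ℝ)-1)/n)) volume
        ((j:ℝ)/n) (((j:ℝ)+1)/n) :=
      my_II_log_right (my_div_le hnpos (by linarith)) (my_div_le hnpos (by linarith))
    have hII2 : IntervalIntegrable (fun x => Real.log (x - (j:ℝ)/n)) volume
        ((j:ℝ)/n) (((j:ℝ)+1)/n) :=
      my_II_log_right le_rfl (my_div_le hnpos (by linarith))
    constructor
    · rw [← intervalIntegrable_iff_integrableOn_Ioc_of_le hle]
      exact ((hII1.sub hII2).const_mul _)
    · rw [← intervalIntegral.integral_of_le hle, intervalIntegral.integral_const_mul,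
        intervalIntegral.integral_sub hII1 hII2,
        my_int_log_right (by ring : ((j:ℝ)+1)/n - ((j:ℝ)-1)/n = 2/n)
          (by ring : (j:ℝ)/n - ((j:ℝ)-1)/n = 1/n) h1n hle,
        my_int_log_right (by ring : ((j:ℝ)+1)/n - (j:ℝ)/n = 1/n)
          (by ring : (j:ℝ)/n - (j:ℝ)/n = 0) le_rfl hle]
      unfold myP
      rw [if_pos (Or.inr rfl), e2n, e1n, Real.log_zero]
      field_simp
      ring
  by_cases hj4 : i = j+2
  · subst hj4
    have e0 : ((↑(j+2):ℝ) - 1)/n = ((j:ℝ)+1)/n := by push_cast; ring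
    have e0' : ((↑(j+2):ℝ))/n = ((j:ℝ)+2)/n := by push_cast; ring
    rw [e0, e0'] at hle ⊢
    have hK : (fun x => myK n a (j+2) j x) = fun x =>
        (|a (j+2) - a j| * ((n:ℝ)/4)) *
          (Real.log (2/(n:ℝ)) - Real.log (x - (j:ℝ)/n)) := by
      funext x
      unfold myK
      rw [if_neg (by omega : ¬ j = (j+2)+1), if_neg (by omega : ¬ j = (j+2)+2),
        if_neg (by omega : ¬ (j+2) = j+1), if_pos rfl]
    rw [hK]
    have hII1 : IntervalIntegrable (fun x => Real.log (x - (j:ℝ)/n)) volume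
        (((j:ℝ)+1)/n) (((j:ℝ)+2)/n) :=
      my_II_log_right (my_div_le hnpos (by linarith)) (my_div_le hnpos (by linarith))
    constructor
    · rw [← intervalIntegrable_iff_integrableOn_Ioc_of_le hle]
      exact ((intervalIntegrable_const.sub hII1).const_mul _)
    · rw [← intervalIntegral.integral_of_le hle, intervalIntegral.integral_const_mul,
        intervalIntegral.integral_sub intervalIntegrable_const hII1,
        intervalIntegral.integral_const,
        my_int_log_right (by ring : ((j:ℝ)+2)/n - (j:ℝ)/n = 2/n)
          (by ring : ((j:ℝ)+1)/n - (j:ℝ)/n = 1/n) h1n hle,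
        show ((j:ℝ)+2)/n - ((j:ℝ)+1)/n = 1/n from by ring]
      unfold myP
      rw [if_neg (by omega), if_pos (Or.inr rfl), e2n, e1n, smul_eq_mul]
      field_simp
      ring
  · have hK : (fun x => myK n a i j x) = fun _ => (0:ℝ) := by
      funext x
      unfold myK
      rw [if_neg hj1, if_neg hj2, if_neg hj3, if_neg hj4, mul_zero]
    rw [hK]
    refine ⟨integrableOn_const (by simp) (by simp), ?_⟩
    unfold myP
    rw [if_neg (by omega : ¬ (j = i+1 ∨ i = j+1)), if_neg (by omega : ¬ (j = i+2 ∨ i = j+2))]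
    simp

lemma my_outer (n : ℕ) (hn : 1 ≤ n) (a : ℕ → ℝ) {i : ℕ} (hi : i ∈ Finset.Icc 1 n) :
    IntegrableOn (fun x => ∫ y in Set.Ioo (0:ℝ) 1,
        |myf n a x - myf n a y| / |x - y| * myφ n (x - y))
      (Set.Ioc (((i:ℝ)-1)/n) ((i:ℝ)/n)) ∧
    ∫ x in Set.Ioc (((i:ℝ)-1)/n) ((i:ℝ)/n), (∫ y in Set.Ioo (0:ℝ) 1,
        |myf n a x - myf n a y| / |x - y| * myφ n (x - y))
      = ∑ j ∈ Finset.Icc 1 n, myP n a i j := by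
  have hae : (fun x => ∫ y in Set.Ioo (0:ℝ) 1,
        |myf n a x - myf n a y| / |x - y| * myφ n (x - y))
      =ᵐ[volume.restrict (Set.Ioc (((i:ℝ)-1)/n) ((i:ℝ)/n))]
      (fun x => ∑ j ∈ Finset.Icc 1 n, myK n a i j x) := by
    rw [← Measure.restrict_congr_set MeasureTheory.Ioo_ae_eq_Ioc,
      Filter.EventuallyEq, ae_restrict_iff' measurableSet_Ioo]
    exact ae_of_all _ fun x hx => my_inner n hn a hi hx
  have hint : IntegrableOn (fun x => ∑ j ∈ Finset.Icc 1 n, myK n a i j x)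
      (Set.Ioc (((i:ℝ)-1)/n) ((i:ℝ)/n)) :=
    integrable_finset_sum _ (fun j hj => (my_outer_piece n hn a hi hj).1)
  refine ⟨hint.congr hae.symm, ?_⟩
  rw [integral_congr_ae hae,
    integral_finset_sum _ (fun j hj => (my_outer_piece n hn a hi hj).1)]
  exact Finset.sum_congr rfl fun j hj => (my_outer_piece n hn a hi hj).2

lemma my_main (n : ℕ) (hn : 1 ≤ n) (a : ℕ → ℝ) :
    (∫ x in Set.Ioo (0:ℝ) 1, ∫ y in Set.Ioo (0:ℝ) 1,
        |myf n a x - myf n a y| / |x - y| * myφ n (x - y))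
      = ∑ i ∈ Finset.Icc 1 n, ∑ j ∈ Finset.Icc 1 n, myP n a i j := by
  rw [my_split n hn _ (fun i hi => (my_outer n hn a hi).1)]
  exact Finset.sum_congr rfl fun i hi => (my_outer n hn a hi).2

lemma my_sum_shift (n k : ℕ) (hk : 1 ≤ k) (g : ℕ → ℝ) :
    (∑ i ∈ Finset.Icc 1 n, if i+k ∈ Finset.Icc 1 n then g i else 0)
      = ∑ i ∈ Finset.Icc 1 (n-k), g i := by
  have h1 : (∑ i ∈ Finset.Icc 1 n, if i+k ∈ Finset.Icc 1 n then g i else 0)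
      = ∑ i ∈ Finset.Icc 1 n, if i ∈ Finset.Icc 1 (n-k) then g i else 0 := by
    refine Finset.sum_congr rfl fun i hi => if_congr ?_ rfl rfl
    simp only [Finset.mem_Icc] at *
    omega
  rw [h1, Finset.sum_ite_mem]
  congr 1
  ext x
  simp only [Finset.mem_inter, Finset.mem_Icc]
  omega

lemma my_sum (n : ℕ) (hn : 1 ≤ n) (a : ℕ → ℝ) :
    ∑ i ∈ Finset.Icc 1 n, ∑ j ∈ Finset.Icc 1 n, myP n a i j
      = (∑ i ∈ Finset.Icc 2 (n - 1), (1 - Real.log 2) / 2 * |a (i + 1) - a (i - 1)|) +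
        ∑ i ∈ Finset.Icc 2 n, Real.log 2 * |a i - a (i - 1)| := by
  have hdecomp : ∀ i j, myP n a i j =
      ((if j = i+1 then Real.log 2/2 * |a i - a j| else 0)
      + (if i = j+1 then Real.log 2/2 * |a i - a j| else 0))
      + ((if j = i+2 then (1-Real.log 2)/4 * |a i - a j| else 0)
      + (if i = j+2 then (1-Real.log 2)/4 * |a i - a j| else 0)) := by
    intro i j
    unfold myP
    split_ifs <;> first | ring1 | (exfalso; omega)
  simp only [hdecomp, Finset.sum_add_distrib]
  -- S1
  have hS1 : ∑ i ∈ Finset.Icc 1 n, ∑ j ∈ Finset.Icc 1 n,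
      (if j = i+1 then Real.log 2/2 * |a i - a j| else 0)
      = ∑ i ∈ Finset.Icc 1 (n-1), Real.log 2/2 * |a i - a (i+1)| := by
    rw [← my_sum_shift n 1 le_rfl]
    refine Finset.sum_congr rfl fun i hi => ?_
    rw [Finset.sum_ite_eq' (Finset.Icc 1 n) (i+1) (fun j => Real.log 2/2 * |a i - a j|)]
  have hS2 : ∑ i ∈ Finset.Icc 1 n, ∑ j ∈ Finset.Icc 1 n,
      (if i = j+1 then Real.log 2/2 * |a i - a j| else 0)
      = ∑ j ∈ Finset.Icc 1 (n-1), Real.log 2/2 * |a (j+1) - a j| := by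
    rw [Finset.sum_comm, ← my_sum_shift n 1 le_rfl]
    refine Finset.sum_congr rfl fun j hj => ?_
    rw [Finset.sum_ite_eq' (Finset.Icc 1 n) (j+1) (fun i => Real.log 2/2 * |a i - a j|)]
  have hS3 : ∑ i ∈ Finset.Icc 1 n, ∑ j ∈ Finset.Icc 1 n,
      (if j = i+2 then (1-Real.log 2)/4 * |a i - a j| else 0)
      = ∑ i ∈ Finset.Icc 1 (n-2), (1-Real.log 2)/4 * |a i - a (i+2)| := by
    rw [← my_sum_shift n 2 (by norm_num)]
    refine Finset.sum_congr rfl fun i hi => ?_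
    rw [Finset.sum_ite_eq' (Finset.Icc 1 n) (i+2) (fun j => (1-Real.log 2)/4 * |a i - a j|)]
  have hS4 : ∑ i ∈ Finset.Icc 1 n, ∑ j ∈ Finset.Icc 1 n,
      (if i = j+2 then (1-Real.log 2)/4 * |a i - a j| else 0)
      = ∑ j ∈ Finset.Icc 1 (n-2), (1-Real.log 2)/4 * |a (j+2) - a j| := by
    rw [Finset.sum_comm, ← my_sum_shift n 2 (by norm_num)]
    refine Finset.sum_congr rfl fun j hj => ?_
    rw [Finset.sum_ite_eq' (Finset.Icc 1 n) (j+2) (fun i => (1-Real.log 2)/4 * |a i - a j|)]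
  rw [hS1, hS2, hS3, hS4]
  have hmap1 : Finset.Icc 2 n = (Finset.Icc 1 (n-1)).map (addRightEmbedding 1) := by
    rw [Finset.map_add_right_Icc]
    ext x
    simp only [Finset.mem_Icc]
    omega
  have hmap2 : Finset.Icc 2 (n-1) = (Finset.Icc 1 (n-2)).map (addRightEmbedding 1) := by
    rw [Finset.map_add_right_Icc]
    ext x
    simp only [Finset.mem_Icc]
    omega
  rw [hmap1, hmap2, Finset.sum_map, Finset.sum_map]
  simp only [addRightEmbedding_apply, Nat.add_sub_cancel]
  rw [← Finset.sum_add_distrib, ← Finset.sum_add_distrib]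
  rw [add_comm (∑ i ∈ Finset.Icc 1 (n-2), _)]
  congr 1
  · refine Finset.sum_congr rfl fun i hi => ?_
    rw [abs_sub_comm (a i) (a (i+1))]
    ring
  · refine Finset.sum_congr rfl fun i hi => ?_
    rw [abs_sub_comm (a i) (a (i+2))]
    ring

end myaux

theorem stmt_17 (n : ℕ) (hn : 1 ≤ n) (a : ℕ → ℝ)
    (φn2 : ℝ → ℝ)
    (hφn2 : φn2 = Set.indicator (Set.Icc (-(2 / (n : ℝ))) (2 / (n : ℝ)))
      (fun _ => (n : ℝ) / 4))
    (f : ℝ → ℝ)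
    (hf : f = fun x => ∑ i ∈ Finset.Icc 1 n,
      a i * Set.indicator (Set.Icc (((i : ℝ) - 1) / n) ((i : ℝ) / n)) 1 x) :
    R1d φn2 f =
      (∑ i ∈ Finset.Icc 2 (n - 1), (1 - Real.log 2) / 2 * |a (i + 1) - a (i - 1)|) +
      ∑ i ∈ Finset.Icc 2 n, Real.log 2 * |a i - a (i - 1)| := by
  have hφ : φn2 = myφ n := hφn2
  have hfm : f = myf n a := hf
  rw [hφ, hfm,
    show R1d (myφ n) (myf n a) = ∫ x in Set.Ioo (0:ℝ) 1, ∫ y in Set.Ioo (0:ℝ) 1,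
      |myf n a x - myf n a y| / |x - y| * myφ n (x - y) from rfl,
    my_main n hn a, my_sum n hn a]
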